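/- Let t be a positive integer and let G be a graph on n vertices, with each edge coloured red or blue, such that the minimum degree of G is at least (2n−2t−1)/(t+1). Then there do not exist t+1 vertices u₁, …, u_{t+1} of G that lie pairwise in distinct red components and pairwise in distinct blue components; equivalently, among any t+1 vertices of G, some two lie in a common red component or in a common blue component. -/

import Mathlib

open SimpleGraph

/-- The spanning subgraph of `G` consisting of the edges of colour `i`,
    for an edge-colouring `c` of `G` with `r` colours. -/
def colSub {V : Type} (G : SimpleGraph V) {r : ℕ} (c : Sym2 V → Fin r) (i : Fin r) :
    SimpleGraph V where
  Adj u v := G.Adj u v ∧ c s(u, v) = i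
  symm := ⟨fun u v h => ⟨h.1.symm, by rw [Sym2.eq_swap]; exact h.2⟩⟩
  loopless := ⟨fun v h => G.irrefl h.1⟩


/-- In a 2-coloured graph on `n` vertices with minimum degree at least
    `(2n-2t-1)/(t+1)`, among any `t+1` vertices some two lie in a common red
    component or in a common blue component. -/
theorem no_large_independent_component_system {V : Type} [Fintype V]
    (G : SimpleGraph V) [DecidableRel G.Adj] (c : Sym2 V → Fin 2)
    (t n : ℕ) (ht : 1 ≤ t) (hn : Fintype.card V = n)
    (hdeg : ∀ v : V, (2 * (n : ℝ) - 2 * t - 1) / (t + 1) ≤ G.degree v) :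
    ∀ f : Fin (t + 1) → V, ∃ i j : Fin (t + 1), i ≠ j ∧
      ((colSub G c 0).connectedComponentMk (f i) =
          (colSub G c 0).connectedComponentMk (f j) ∨
        (colSub G c 1).connectedComponentMk (f i) =
          (colSub G c 1).connectedComponentMk (f j)) := by
  classical
  intro f
  by_contra h
  push_neg at h
  set Gr := colSub G c 0 with hGr
  set Gb := colSub G c 1 with hGb
  set R : Fin (t+1) → Finset V :=
    fun i => (Gr.connectedComponentMk (f i)).supp.toFinset with hR
  set B : Fin (t+1) → Finset V :=
    fun i => (Gb.connectedComponentMk (f i)).supp.toFinset with hB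
  have hmemR : ∀ i v, v ∈ R i ↔
      Gr.connectedComponentMk v = Gr.connectedComponentMk (f i) := by
    intro i v
    simp [hR, SimpleGraph.ConnectedComponent.mem_supp_iff]
  have hmemB : ∀ i v, v ∈ B i ↔
      Gb.connectedComponentMk v = Gb.connectedComponentMk (f i) := by
    intro i v
    simp [hB, SimpleGraph.ConnectedComponent.mem_supp_iff]
  -- per-vertex counting
  have hcard : ∀ i, G.degree (f i) + 2 ≤ (R i).card + (B i).card := by
    intro i
    have hnotmem : f i ∉ G.neighborFinset (f i) := by
      simp [SimpleGraph.mem_neighborFinset]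
    have hsub : insert (f i) (G.neighborFinset (f i)) ⊆ R i ∪ B i := by
      intro v hv
      rcases Finset.mem_insert.mp hv with rfl | hv
      · exact Finset.mem_union_left _ ((hmemR i _).mpr rfl)
      · rw [SimpleGraph.mem_neighborFinset] at hv
        have h2 : ∀ x : Fin 2, x = 0 ∨ x = 1 := by decide
        rcases h2 (c s(f i, v)) with hc | hc
        · refine Finset.mem_union_left _ ((hmemR i v).mpr ?_)
          exact SimpleGraph.ConnectedComponent.sound
            (SimpleGraph.Adj.reachable (show Gr.Adj v (f i) from ⟨hv.symm,
              by rw [Sym2.eq_swap]; exact hc⟩))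
        · refine Finset.mem_union_right _ ((hmemB i v).mpr ?_)
          exact SimpleGraph.ConnectedComponent.sound
            (SimpleGraph.Adj.reachable (show Gb.Adj v (f i) from ⟨hv.symm,
              by rw [Sym2.eq_swap]; exact hc⟩))
    have h1 : G.degree (f i) + 1 ≤ (R i ∪ B i).card := by
      have := Finset.card_le_card hsub
      rwa [Finset.card_insert_of_notMem hnotmem,
        SimpleGraph.card_neighborFinset_eq_degree] at this
    have h2 : 1 ≤ ((R i) ∩ (B i)).card := by
      refine Finset.card_pos.mpr ⟨f i, ?_⟩
      exact Finset.mem_inter.mpr ⟨(hmemR i _).mpr rfl, (hmemB i _).mpr rfl⟩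
    have h3 : (R i ∪ B i).card + (R i ∩ B i).card = (R i).card + (B i).card :=
      Finset.card_union_add_card_inter _ _
    omega
  -- disjointness
  have hdisjR : ∀ i ∈ Finset.univ, ∀ j ∈ Finset.univ, i ≠ j →
      Disjoint (R i) (R j) := by
    intro i _ j _ hij
    rw [Finset.disjoint_left]
    intro v hvi hvj
    exact (h i j hij).1 (((hmemR i v).mp hvi).symm.trans ((hmemR j v).mp hvj))
  have hdisjB : ∀ i ∈ Finset.univ, ∀ j ∈ Finset.univ, i ≠ j →
      Disjoint (B i) (B j) := by
    intro i _ j _ hij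
    rw [Finset.disjoint_left]
    intro v hvi hvj
    exact (h i j hij).2 (((hmemB i v).mp hvi).symm.trans ((hmemB j v).mp hvj))
  have hsumR : (∑ i, (R i).card) ≤ n := by
    rw [← Finset.card_biUnion hdisjR, ← hn]
    exact Finset.card_le_univ _
  have hsumB : (∑ i, (B i).card) ≤ n := by
    rw [← Finset.card_biUnion hdisjB, ← hn]
    exact Finset.card_le_univ _
  -- total counting
  have htot : (∑ i, G.degree (f i)) + 2 * (t + 1) ≤ 2 * n := by
    have := Finset.sum_le_sum (fun i (_ : i ∈ Finset.univ) => hcard i)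
    simp only [Finset.sum_add_distrib, Finset.sum_const, Finset.card_univ,
      Fintype.card_fin, smul_eq_mul] at this
    omega
  -- degree lower bound, in ℝ
  have hlow : (2 * (n : ℝ) - 2 * t - 1) ≤ ∑ i, (G.degree (f i) : ℝ) := by
    have hpos : (0 : ℝ) < (t : ℝ) + 1 := by positivity
    have h1 : ∀ i ∈ (Finset.univ : Finset (Fin (t+1))),
        (2 * (n : ℝ) - 2 * t - 1) / (t + 1) ≤ (G.degree (f i) : ℝ) :=
      fun i _ => hdeg (f i)
    have h2 := Finset.sum_le_sum h1
    rw [Finset.sum_const] at h2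
    have hcu : (Finset.univ : Finset (Fin (t+1))).card = t + 1 := by simp
    rw [hcu] at h2
    have : ((t : ℝ) + 1) * ((2 * (n : ℝ) - 2 * t - 1) / (t + 1)) =
        2 * (n : ℝ) - 2 * t - 1 := by field_simp
    calc 2 * (n : ℝ) - 2 * t - 1
        = ((t : ℝ) + 1) * ((2 * (n : ℝ) - 2 * t - 1) / (t + 1)) := this.symm
      _ = (t + 1 : ℕ) • ((2 * (n : ℝ) - 2 * t - 1) / (t + 1)) := by
          push_cast [nsmul_eq_mul]; ring
      _ ≤ _ := h2
  have hupp : (∑ i, (G.degree (f i) : ℝ)) ≤ 2 * (n : ℝ) - 2 * (t + 1) := by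
    have : ((∑ i, G.degree (f i) : ℕ) : ℝ) ≤ 2 * (n : ℝ) - 2 * ((t : ℝ) + 1) := by
      have h' : ((∑ i, G.degree (f i)) + 2 * (t + 1) : ℕ) ≤ (2 * n : ℕ) := htot
      have := (Nat.cast_le (α := ℝ)).mpr h'
      push_cast at this
      linarith
    push_cast at this ⊢
    linarith
  linarith
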